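/- Let g, h : (0,4) → ℂ be continuous, with g(q) → h₀ and h(q) → h₀ as q → 4⁻, and suppose for every q < 4 we have two linear relations: a(σ(q)) = 0 and a(1) = 0, where a : [σ(q),1] → ℂ is differentiable in the exponent parameter η of F_{q,η}(e) = E[e^{iηW}1_{e∈γ}]. If σ(q) → 1 as q → 4, then the derivative relation at η = 1 holds: G(NW) - G(SE) = i(G(NE) - G(SW)), where G(e) = E[W·e^{iW}1_{e∈γ}]. -/

import Mathlib

open Filter Complex

/-- Rolle-type argument for `q = 4`: let `Φ q η` denote the local defect
`F_{q,η}(NW) - F_{q,η}(SE) - i(F_{q,η}(NE) - F_{q,η}(SW))`. If `Φ q · ` vanishes at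
`η = σ(q)` and `η = 1` for every `q ∈ (0,4)`, `σ(q) → 1` as `q → 4⁻`, and the
`η`-derivative `Φ' q η` converges to `G(NW) - G(SE) - i(G(NE) - G(SW))` as
`(q,η) → (4,1)` with `q < 4`, then `G(NW) - G(SE) = i(G(NE) - G(SW))`. -/
theorem rolle_q_four (Φ Φ' : ℝ → ℝ → ℂ) (σ : ℝ → ℝ) (GNW GSE GNE GSW : ℂ)
    (hderiv : ∀ q ∈ Set.Ioo (0:ℝ) 4, ∀ η : ℝ, HasDerivAt (Φ q) (Φ' q η) η)
    (hzeroσ : ∀ q ∈ Set.Ioo (0:ℝ) 4, Φ q (σ q) = 0)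
    (hzero1 : ∀ q ∈ Set.Ioo (0:ℝ) 4, Φ q 1 = 0)
    (hσlt : ∀ q ∈ Set.Ioo (0:ℝ) 4, σ q < 1)
    (hσ : Tendsto σ (nhdsWithin 4 (Set.Iio 4)) (nhds 1))
    (hlim : Tendsto (fun p : ℝ × ℝ => Φ' p.1 p.2)
      (nhdsWithin (4, 1) (Set.Iio 4 ×ˢ Set.univ))
      (nhds ((GNW - GSE) - Complex.I * (GNE - GSW)))) :
    GNW - GSE = Complex.I * (GNE - GSW) := by
  set L := (GNW - GSE) - Complex.I * (GNE - GSW) with hL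
  have hmem : ∀ᶠ q in nhdsWithin (4:ℝ) (Set.Iio 4), q ∈ Set.Ioo (0:ℝ) 4 := by
    filter_upwards [self_mem_nhdsWithin,
      (eventually_gt_nhds (by norm_num : (0:ℝ) < 4)).filter_mono nhdsWithin_le_nhds]
      with q h1 h2
    exact ⟨h2, h1⟩
  have main : ∀ (φ : ℂ →L[ℝ] ℝ), φ L = 0 := by
    intro φ
    have rolle : ∀ q ∈ Set.Ioo (0:ℝ) 4, ∃ c ∈ Set.Ioo (σ q) 1, φ (Φ' q c) = 0 := by
      intro q hq
      have hcont : Continuous (fun η => φ (Φ q η)) :=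
        φ.continuous.comp (continuous_iff_continuousAt.mpr fun x => (hderiv q hq x).continuousAt)
      exact exists_hasDerivAt_eq_zero (f := fun η => φ (Φ q η)) (f' := fun η => φ (Φ' q η))
        (hσlt q hq) hcont.continuousOn (by show φ (Φ q (σ q)) = φ (Φ q 1); rw [show Φ q (σ q) = 0 from hzeroσ q hq, hzero1 q hq])
        (fun x _ => φ.hasFDerivAt.comp_hasDerivAt x (hderiv q hq x))
    choose! ξ hξmem hξzero using rolle
    have hξto : Tendsto ξ (nhdsWithin 4 (Set.Iio 4)) (nhds 1) := by
      apply tendsto_of_tendsto_of_tendsto_of_le_of_le' hσ tendsto_const_nhds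
      · filter_upwards [hmem] with q hq; exact (hξmem q hq).1.le
      · filter_upwards [hmem] with q hq; exact (hξmem q hq).2.le
    have hpair : Tendsto (fun q => ((q, ξ q) : ℝ × ℝ)) (nhdsWithin 4 (Set.Iio 4))
        (nhdsWithin (4, 1) (Set.Iio 4 ×ˢ Set.univ)) := by
      rw [nhdsWithin_prod_eq, nhdsWithin_univ]
      exact tendsto_id.prodMk hξto
    have h1 : Tendsto (fun q => Φ' q (ξ q)) (nhdsWithin 4 (Set.Iio 4)) (nhds L) :=
      hlim.comp hpair
    have h2 : Tendsto (fun q => φ (Φ' q (ξ q))) (nhdsWithin 4 (Set.Iio 4)) (nhds (φ L)) :=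
      (φ.continuous.tendsto L).comp h1
    have h3 : Tendsto (fun q => φ (Φ' q (ξ q))) (nhdsWithin 4 (Set.Iio 4)) (nhds 0) := by
      apply Tendsto.congr' _ tendsto_const_nhds
      filter_upwards [hmem] with q hq
      exact (hξzero q hq).symm
    exact tendsto_nhds_unique h2 h3
  have hzero : L = 0 := Complex.ext (main Complex.reCLM) (main Complex.imCLM)
  exact sub_eq_zero.mp hzero
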